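/- For any f ∈ 𝒱^+ and any g ∈ D^{−1}𝒱^−, the scalar function 𝒮(f,g) is a polynomial in z_1,…,z_n,h that is symmetric in z_1,…,z_n; that is, 𝒮(f,g) ∈ ℂ[z_1,…,z_n]^{S_n} ⊗ ℂ[h]. -/

import Mathlib

open scoped BigOperators

noncomputable section

namespace GRTV

/-- The field `ℂ(z_1,…,z_n,h)` of rational functions. -/
abbrev K (n : ℕ) : Type := FractionRing (MvPolynomial (Fin n ⊕ Unit) ℂ)

/-- The variable `z_i`. -/
def z {n : ℕ} (i : Fin n) : K n :=
  algebraMap (MvPolynomial (Fin n ⊕ Unit) ℂ) (K n) (MvPolynomial.X (Sum.inl i))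

/-- The variable `h`. -/
def hvar {n : ℕ} : K n :=
  algebraMap (MvPolynomial (Fin n ⊕ Unit) ℂ) (K n) (MvPolynomial.X (Sum.inr ()))

/-- The field automorphism of `ℂ(z_1,…,z_n,h)` permuting the variables `z_i` by `σ`
(and fixing `h`); `f ↦ f^σ`. -/
def permK {n : ℕ} (σ : Equiv.Perm (Fin n)) : K n ≃+* K n :=
  IsFractionRing.ringEquivOfRingEquiv
    (MvPolynomial.renameEquiv ℂ (Equiv.sumCongr σ (Equiv.refl Unit))).toRingEquiv

/-- `V ⊗ ℂ(z_1,…,z_n,h)` in coordinates: a vector is the family of its coordinates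
in the basis `{v_I}`, where a basis index (a decomposition `I`) is recorded as the word
`m : Fin n → Fin N` with `I_j = m⁻¹(j)`. -/
abbrev VV (n N : ℕ) : Type := (Fin n → Fin N) → K n

/-- `h` for the `+` case (`ε = true`) and `-h` for the `−` case (`ε = false`). -/
def sign' {n : ℕ} (ε : Bool) : K n := if ε then hvar else -hvar

def fin1 {n : ℕ} (i : ℕ) (hi : i + 1 < n) : Fin n := ⟨i, Nat.lt_of_succ_lt hi⟩
def fin2 {n : ℕ} (i : ℕ) (hi : i + 1 < n) : Fin n := ⟨i + 1, hi⟩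

/-- The operator `s_i^±` (`ε = true` for `+`, `ε = false` for `−`):
`s_i^± f = ((z_i−z_{i+1})P^{(i,i+1)} ∓ h)/(z_i−z_{i+1}) · f^{s_i} ± h/(z_i−z_{i+1}) · f`.
Here `P^{(i,i+1)}` acts on coordinates by precomposing the word with the transposition,
and `f^{s_i}` applies `permK` coordinatewise. -/
def sOp {n N : ℕ} (ε : Bool) (i : ℕ) (hi : i + 1 < n) (f : VV n N) : VV n N :=
  fun m =>
    ((z (fin1 i hi) - z (fin2 i hi)) *
          permK (Equiv.swap (fin1 i hi) (fin2 i hi))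
            (f (m ∘ ⇑(Equiv.swap (fin1 i hi) (fin2 i hi))))
        - sign' ε * permK (Equiv.swap (fin1 i hi) (fin2 i hi)) (f m))
      / (z (fin1 i hi) - z (fin2 i hi))
    + sign' ε / (z (fin1 i hi) - z (fin2 i hi)) * f m

/-- The block `I_a = {k : m k = a}` of the decomposition encoded by the word `m`. -/
def fib {n N : ℕ} (m : Fin n → Fin N) (a : Fin N) : Finset (Fin n) :=
  Finset.univ.filter (fun k => m k = a)

/-- `I ∈ ℐ_λ`, i.e. `|I_a| = λ_a` for all `a`. -/
def memI {n N : ℕ} (lam : Fin N → ℕ) (m : Fin n → Fin N) : Prop :=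
  ∀ a : Fin N, (fib m a).card = lam a

/-- The order on subsets of `{1,…,n}` of equal cardinality:
`A ≤ B` iff `a_j ≤ b_j` for all `j`, where `A = {a_1<⋯<a_m}`, `B = {b_1<⋯<b_m}`. -/
def subLE {n : ℕ} (A B : Finset (Fin n)) : Prop :=
  ∃ h : A.card = B.card,
    ∀ j : Fin A.card, (↑(A.orderIsoOfFin rfl j) : Fin n) ≤ ↑(B.orderIsoOfFin h.symm j)

/-- The strict order `I < J` on decompositions: `I_k = J_k` for `k < l` and `I_l < J_l`. -/
def decLT {n N : ℕ} (mI mJ : Fin n → Fin N) : Prop :=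
  ∃ l : Fin N, (∀ k : Fin N, k < l → fib mI k = fib mJ k) ∧
    subLE (fib mI l) (fib mJ l) ∧ fib mI l ≠ fib mJ l

/-- `I ≤ J` on decompositions. -/
def decLE {n N : ℕ} (mI mJ : Fin n → Fin N) : Prop :=
  decLT mI mJ ∨ mI = mJ

/-- `Q(z_I) = ∏_{1≤a<b≤N} ∏_{i∈I_a} ∏_{j∈I_b} (z_i−z_j+h)`. -/
def Qz {n N : ℕ} (m : Fin n → Fin N) : K n :=
  ∏ p ∈ Finset.univ.filter (fun p : Fin n × Fin n => m p.1 < m p.2),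
    (z p.1 - z p.2 + hvar)

/-- `R(z_I) = ∏_{1≤a<b≤N} ∏_{i∈I_a} ∏_{j∈I_b} (z_i−z_j)`. -/
def Rz {n N : ℕ} (m : Fin n → Fin N) : K n :=
  ∏ p ∈ Finset.univ.filter (fun p : Fin n × Fin n => m p.1 < m p.2),
    (z p.1 - z p.2)

/-- The basis vector `v_I` corresponding to the word `m0`. -/
def bas {n N : ℕ} (m0 : Fin n → Fin N) : VV n N :=
  fun m => if m = m0 then 1 else 0

/-- `D = ∏_{1≤i<j≤n}(z_i−z_j+h)`. -/
def Dpoly (n : ℕ) : K n :=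
  ∏ p ∈ Finset.univ.filter (fun p : Fin n × Fin n => p.1 < p.2), (z p.1 - z p.2 + hvar)

/-- `Ď = ∏_{1≤i<j≤n}(z_j−z_i+h)`. -/
def Dcheck (n : ℕ) : K n :=
  ∏ p ∈ Finset.univ.filter (fun p : Fin n × Fin n => p.1 < p.2), (z p.2 - z p.1 + hvar)

/-- `f ∈ V ⊗ ℂ[z_1,…,z_n,h]`: all coordinates of `f` are polynomials. -/
def polyVec {n N : ℕ} (f : VV n N) : Prop :=
  ∀ m : Fin n → Fin N, ∃ p : MvPolynomial (Fin n ⊕ Unit) ℂ,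
    f m = algebraMap (MvPolynomial (Fin n ⊕ Unit) ℂ) (K n) p

open MvPolynomial

lemma sumCongr_comp {n : ℕ} (σ τ : Equiv.Perm (Fin n)) :
    ⇑(Equiv.sumCongr σ (Equiv.refl Unit)) ∘ ⇑(Equiv.sumCongr τ (Equiv.refl Unit)) =
      ⇑(Equiv.sumCongr (σ * τ) (Equiv.refl Unit)) := by
  funext s; cases s <;> rfl

lemma permK_am {n : ℕ} (σ : Equiv.Perm (Fin n)) (a : MvPolynomial (Fin n ⊕ Unit) ℂ) :
    permK σ (algebraMap (MvPolynomial (Fin n ⊕ Unit) ℂ) (K n) a) =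
      algebraMap (MvPolynomial (Fin n ⊕ Unit) ℂ) (K n)
        (MvPolynomial.rename (⇑(Equiv.sumCongr σ (Equiv.refl Unit))) a) := by
  simp [permK, IsFractionRing.ringEquivOfRingEquiv_algebraMap]

lemma am_inj {n : ℕ} : Function.Injective (algebraMap (MvPolynomial (Fin n ⊕ Unit) ℂ) (K n)) :=
  IsFractionRing.injective _ _

lemma permK_one {n : ℕ} (x : K n) : permK (1 : Equiv.Perm (Fin n)) x = x := by
  have h : (permK (1 : Equiv.Perm (Fin n)) : K n →+* K n) = RingHom.id (K n) := by
    apply IsLocalization.ringHom_ext (nonZeroDivisors (MvPolynomial (Fin n ⊕ Unit) ℂ))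
    refine RingHom.ext fun a => ?_
    simp only [RingHom.comp_apply, RingHom.coe_coe, RingHom.id_apply, permK_am]
    congr 1
    have h2 : ⇑(Equiv.sumCongr (1 : Equiv.Perm (Fin n)) (Equiv.refl Unit)) = id := by
      funext s; cases s <;> rfl
    rw [h2, MvPolynomial.rename_id]
    rfl
  exact DFunLike.congr_fun h x

lemma permK_mul {n : ℕ} (σ τ : Equiv.Perm (Fin n)) (x : K n) :
    permK (σ * τ) x = permK σ (permK τ x) := by
  have h : (permK (σ * τ) : K n →+* K n)
      = (permK σ : K n →+* K n).comp (permK τ : K n →+* K n) := by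
    apply IsLocalization.ringHom_ext (nonZeroDivisors (MvPolynomial (Fin n ⊕ Unit) ℂ))
    refine RingHom.ext fun a => ?_
    simp only [RingHom.comp_apply, RingHom.coe_coe, permK_am, MvPolynomial.rename_rename,
      sumCongr_comp]
  exact DFunLike.congr_fun h x

lemma permK_z {n : ℕ} (σ : Equiv.Perm (Fin n)) (i : Fin n) : permK σ (z i) = z (σ i) := by
  simp [z, permK_am]

lemma permK_hvar {n : ℕ} (σ : Equiv.Perm (Fin n)) : permK σ (hvar : K n) = hvar := by
  simp [hvar, permK_am]

lemma am_ne_zero {n : ℕ} (p : MvPolynomial (Fin n ⊕ Unit) ℂ) (v : Fin n ⊕ Unit → ℂ)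
    (h : MvPolynomial.eval v p ≠ 0) :
    algebraMap (MvPolynomial (Fin n ⊕ Unit) ℂ) (K n) p ≠ 0 := by
  intro h0
  apply h
  have : p = 0 := am_inj (by simpa using h0)
  simp [this]
lemma permK_invol {n : ℕ} (a b : Fin n) (x : K n) :
    permK (Equiv.swap a b) (permK (Equiv.swap a b) x) = x := by
  rw [← permK_mul, Equiv.swap_mul_self, permK_one]

lemma reindex_sum {n N : ℕ} (s : Equiv.Perm (Fin n)) (F : (Fin n → Fin N) → K n) :
    ∑ m : Fin n → Fin N, F (m ∘ ⇑s) = ∑ m : Fin n → Fin N, F m := by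
  apply Fintype.sum_bijective (fun m : Fin n → Fin N => m ∘ ⇑s)
  · exact (Equiv.arrowCongr s.symm (Equiv.refl (Fin N))).bijective
  · intro m; rfl

set_option maxHeartbeats 1000000 in
lemma adj_inv {n N : ℕ} (f g : VV n N) (i : ℕ) (hi : i + 1 < n)
    (hf : sOp true i hi f = f) (hg : sOp false i hi g = g) :
    permK (Equiv.swap (fin1 i hi) (fin2 i hi)) (∑ m : Fin n → Fin N, f m * g m)
      = ∑ m : Fin n → Fin N, f m * g m := by
  classical
  set a := fin1 i hi
  set b := fin2 i hi
  have hab : a ≠ b := by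
    simp only [a, b, fin1, fin2, Fin.ne_iff_vne]
    omega
  set s := Equiv.swap a b with hs
  set α : K n := z a - z b with hα_def
  have hαeq : α = algebraMap (MvPolynomial (Fin n ⊕ Unit) ℂ) (K n)
      (MvPolynomial.X (Sum.inl a) - MvPolynomial.X (Sum.inl b)) := by
    rw [map_sub]; rfl
  have hα : α ≠ 0 := by
    rw [hαeq]
    apply am_ne_zero _ (fun t => if t = Sum.inl a then 1 else 0)
    have h1 : (Sum.inl b : Fin n ⊕ Unit) ≠ Sum.inl a := by simp [hab.symm]
    simp [h1]
  have hαh : α - hvar ≠ 0 := by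
    have : α - hvar = algebraMap (MvPolynomial (Fin n ⊕ Unit) ℂ) (K n)
        (MvPolynomial.X (Sum.inl a) - MvPolynomial.X (Sum.inl b) - MvPolynomial.X (Sum.inr ())) := by
      rw [map_sub, ← hαeq]; rfl
    rw [this]
    apply am_ne_zero _ (fun t => if t = Sum.inl a then 1 else 0)
    have h1 : (Sum.inl b : Fin n ⊕ Unit) ≠ Sum.inl a := by simp [hab.symm]
    have h2 : (Sum.inr () : Fin n ⊕ Unit) ≠ Sum.inl a := by simp
    simp [h1, h2]
  set A : (Fin n → Fin N) → K n := fun m => permK s (f (m ∘ ⇑s)) with hA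
  set B : (Fin n → Fin N) → K n := fun m => permK s (f m) with hB
  set A' : (Fin n → Fin N) → K n := fun m => permK s (g (m ∘ ⇑s)) with hA'
  set B' : (Fin n → Fin N) → K n := fun m => permK s (g m) with hB'
  have E1 : ∀ m, α * f m = α * A m - hvar * B m + hvar * f m := by
    intro m
    have h1 := congrFun hf m
    simp only [sOp, sign', if_pos, ← hα_def, ← hs] at h1
    rw [div_mul_eq_mul_div, ← add_div, div_eq_iff hα] at h1
    have h1' : α * A m - hvar * B m + hvar * f m = f m * α := h1
    linear_combination -h1'
  have E2 : ∀ m, α * g m = α * A' m + hvar * B' m - hvar * g m := by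
    intro m
    have h1 := congrFun hg m
    simp only [sOp, sign', Bool.false_eq_true, if_neg, ← hα_def, ← hs, reduceIte] at h1
    rw [div_mul_eq_mul_div, ← add_div, div_eq_iff hα] at h1
    have h1' : α * A' m - -hvar * B' m + -hvar * g m = g m * α := h1
    linear_combination -h1'
  set S : K n := ∑ m : Fin n → Fin N, f m * g m with hS
  set SAG : K n := ∑ m : Fin n → Fin N, A m * g m with hSAG
  set SBG : K n := ∑ m : Fin n → Fin N, B m * g m with hSBG
  have Si : α * S = α * SAG - hvar * SBG + hvar * S := by
    rw [hS, hSAG, hSBG]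
    rw [Finset.mul_sum, Finset.mul_sum, Finset.mul_sum, Finset.mul_sum]
    rw [← Finset.sum_sub_distrib, ← Finset.sum_add_distrib]
    refine Finset.sum_congr rfl fun m _ => ?_
    linear_combination g m * E1 m
  have Sii : α * S = α * (∑ m : Fin n → Fin N, f m * A' m)
      + hvar * (∑ m : Fin n → Fin N, f m * B' m) - hvar * S := by
    rw [hS]
    rw [Finset.mul_sum, Finset.mul_sum, Finset.mul_sum, Finset.mul_sum]
    rw [← Finset.sum_add_distrib, ← Finset.sum_sub_distrib]
    refine Finset.sum_congr rfl fun m _ => ?_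
    linear_combination f m * E2 m
  have hsα : permK s α = -α := by
    rw [hα_def, map_sub, permK_z, permK_z, hs, Equiv.swap_apply_left, Equiv.swap_apply_right]
    ring
  have hmss : ∀ m : Fin n → Fin N, (m ∘ ⇑s) ∘ ⇑s = m := by
    intro m; funext k
    simp only [Function.comp_apply, hs, Equiv.swap_apply_self]
  have hPS_SFA : permK s (∑ m : Fin n → Fin N, f m * A' m) = SAG := by
    rw [map_sum]
    have e1 : ∀ m : Fin n → Fin N, permK s (f m * A' m) = B m * g (m ∘ ⇑s) := by
      intro m
      rw [map_mul]
      congr 1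
      rw [hA']
      exact permK_invol a b _
    rw [Finset.sum_congr rfl fun m _ => e1 m, hSAG]
    calc ∑ m : Fin n → Fin N, B m * g (m ∘ ⇑s)
        = ∑ m : Fin n → Fin N, (fun m' => B m' * g (m' ∘ ⇑s)) (m ∘ ⇑s) :=
          (reindex_sum s _).symm
      _ = ∑ m : Fin n → Fin N, A m * g m := by
          refine Finset.sum_congr rfl fun m _ => ?_
          simp only []
          rw [hmss m]
  have hPS_SFB : permK s (∑ m : Fin n → Fin N, f m * B' m) = SBG := by
    rw [map_sum, hSBG]
    refine Finset.sum_congr rfl fun m _ => ?_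
    rw [map_mul]
    congr 1
    rw [hB']
    exact permK_invol a b _
  have Siii : (-α) * permK s S = (-α) * SAG + hvar * SBG - hvar * permK s S := by
    have h2 : permK s (α * (∑ m : Fin n → Fin N, f m * A' m)
        + hvar * (∑ m : Fin n → Fin N, f m * B' m) - hvar * S)
        = (-α) * SAG + hvar * SBG - hvar * permK s S := by
      rw [map_sub, map_add, map_mul, hsα, map_mul, map_mul, permK_hvar, hPS_SFA, hPS_SFB]
    calc (-α) * permK s S = permK s α * permK s S := by rw [hsα]
      _ = permK s (α * S) := (map_mul _ _ _).symm
      _ = (-α) * SAG + hvar * SBG - hvar * permK s S := by rw [Sii]; exact h2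
  have key : (α - hvar) * (S - permK s S) = 0 := by linear_combination Si + Siii
  rcases mul_eq_zero.mp key with h | h
  · exact absurd h hαh
  · linear_combination -h
lemma full_inv {n : ℕ} (S : K n)
    (hadj : ∀ (i : ℕ) (hi : i + 1 < n), permK (Equiv.swap (fin1 i hi) (fin2 i hi)) S = S)
    (σ : Equiv.Perm (Fin n)) : permK σ S = S := by
  cases n with
  | zero =>
      have : σ = 1 := Equiv.ext fun x => x.elim0
      rw [this, permK_one]
  | succ m =>
      have hσ : σ ∈ Submonoid.closure
          (Set.range fun i : Fin m => Equiv.swap i.castSucc i.succ) := by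
        rw [Equiv.Perm.mclosure_swap_castSucc_succ m]; trivial
      induction hσ using Submonoid.closure_induction with
      | mem x hx =>
          obtain ⟨i, rfl⟩ := hx
          have hi : (i : ℕ) + 1 < m + 1 := by omega
          have h1 : i.castSucc = fin1 (i : ℕ) hi := by
            apply Fin.ext; simp [fin1]
          have h2 : i.succ = fin2 (i : ℕ) hi := by
            apply Fin.ext; simp [fin2]
          simp only []
          rw [h1, h2]
          exact hadj _ _
      | one => exact permK_one S
      | mul x y hx hy ihx ihy => rw [permK_mul, ihy, ihx]
open MvPolynomial in
/-- The ring equivalence `ℂ[z,h] ≃ (ℂ[z])[h]`. -/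
def toPolyH (n : ℕ) : MvPolynomial (Fin n ⊕ Unit) ℂ ≃+* Polynomial (MvPolynomial (Fin n) ℂ) :=
  ((renameEquiv ℂ (Equiv.sumComm (Fin n) Unit)).toRingEquiv.trans
    (sumAlgEquiv ℂ Unit (Fin n)).toRingEquiv).trans
    (pUnitAlgEquiv (MvPolynomial (Fin n) ℂ)).toRingEquiv

open MvPolynomial in
lemma toPolyH_Xl {n : ℕ} (i : Fin n) :
    toPolyH n (X (Sum.inl i)) = Polynomial.C (X i) := by
  simp [toPolyH, sumAlgEquiv_X_inl, sumAlgEquiv_X_inr]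

open MvPolynomial in
lemma toPolyH_Xr {n : ℕ} :
    toPolyH n (X (Sum.inr ())) = Polynomial.X := by
  simp [toPolyH, sumAlgEquiv_X_inl, sumAlgEquiv_X_inr]

open MvPolynomial in
lemma prime_lin {n : ℕ} (i j : Fin n) :
    Prime (X (Sum.inl i) - X (Sum.inl j) + X (Sum.inr ()) :
      MvPolynomial (Fin n ⊕ Unit) ℂ) := by
  rw [← MulEquiv.prime_iff (toPolyH n).toMulEquiv]
  have : (toPolyH n).toMulEquiv (X (Sum.inl i) - X (Sum.inl j) + X (Sum.inr ()))
      = Polynomial.X - Polynomial.C (X j - X i) := by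
    show toPolyH n (X (Sum.inl i) - X (Sum.inl j) + X (Sum.inr ()))
        = Polynomial.X - Polynomial.C (X j - X i)
    rw [map_add, map_sub, toPolyH_Xl, toPolyH_Xl, toPolyH_Xr, map_sub]
    ring
  rw [this]
  exact Polynomial.prime_X_sub_C _
open MvPolynomial in
lemma lin_not_dvd {n : ℕ} (i j k l : Fin n) (hij : i ≠ j) (hkl : k ≠ l)
    (hne : (i, j) ≠ (k, l)) :
    ¬ ((X (Sum.inl i) - X (Sum.inl j) + X (Sum.inr ()) : MvPolynomial (Fin n ⊕ Unit) ℂ) ∣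
      (X (Sum.inl k) - X (Sum.inl l) + X (Sum.inr ()))) := by
  classical
  obtain ⟨x, hx1, hx2⟩ : ∃ x : Fin n → ℂ, x i - x j + 1 = 0 ∧ x k - x l + 1 ≠ 0 := by
    by_cases hc1 : k = j ∧ l = i
    · refine ⟨fun t => if t = i then 0 else if t = j then 1 else 0, ?_, ?_⟩
      · norm_num [hij, hij.symm]
      · obtain ⟨rfl, rfl⟩ := hc1
        norm_num [hij, hij.symm]
    · by_cases hc2 : k ≠ i ∧ k ≠ j
      · refine ⟨fun t => if t = i then 0 else if t = j then 1 else if t = k then 5 else 0, ?_, ?_⟩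
        · norm_num [hij, hij.symm]
        · obtain ⟨hki, hkj⟩ := hc2
          have hlk : l ≠ k := hkl.symm
          rcases eq_or_ne l i with rfl | hli
          · norm_num [hij, hij.symm, hki, hkj, hkl, hlk]
          · rcases eq_or_ne l j with rfl | hlj
            · norm_num [hij, hij.symm, hki, hkj, hkl, hlk, hli]
            · norm_num [hij, hij.symm, hki, hkj, hkl, hlk, hli, hlj]
      · have hk : k = i ∨ k = j := by tauto
        have hli : l ≠ i := by
          rintro rfl
          rcases hk with rfl | rfl
          · exact hkl rfl
          · exact hc1 ⟨rfl, rfl⟩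
        have hlj : l ≠ j := by
          rintro rfl
          rcases hk with rfl | rfl
          · exact hne rfl
          · exact hkl rfl
        refine ⟨fun t => if t = i then 0 else if t = j then 1 else if t = l then 5 else 0, ?_, ?_⟩
        · norm_num [hij, hij.symm, hli.symm, hlj.symm]
        · rcases hk with rfl | rfl
          · norm_num [hij, hij.symm, hli, hlj, hkl, hkl.symm]
          · norm_num [hij, hij.symm, hli, hlj, hkl, hkl.symm]
  rintro ⟨c, hc⟩
  set v : Fin n ⊕ Unit → ℂ := Sum.elim x (fun _ => 1) with hv
  have hev := congrArg (eval v) hc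
  rw [map_mul] at hev
  simp only [map_add, map_sub, eval_X, hv, Sum.elim_inl, Sum.elim_inr] at hev
  rw [hx1, zero_mul] at hev
  exact hx2 hev

lemma prod_primes_dvd' {n : ℕ} {ι : Type*} [DecidableEq ι] (s : Finset ι)
    (F : ι → MvPolynomial (Fin n ⊕ Unit) ℂ) (P : MvPolynomial (Fin n ⊕ Unit) ℂ)
    (hp : ∀ i ∈ s, Prime (F i))
    (hnd : ∀ i ∈ s, ∀ j ∈ s, i ≠ j → ¬ F i ∣ F j)
    (hd : ∀ i ∈ s, F i ∣ P) : (∏ i ∈ s, F i) ∣ P := by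
  classical
  induction s using Finset.induction_on generalizing P with
  | empty => simp
  | @insert a s' ha ih =>
      obtain ⟨Q, hQ⟩ := hd a (Finset.mem_insert_self a s')
      rw [Finset.prod_insert ha, hQ]
      refine mul_dvd_mul_left _ (ih Q (fun i hi => hp i (Finset.mem_insert_of_mem hi))
        (fun i hi j hj h => hnd i (Finset.mem_insert_of_mem hi) j (Finset.mem_insert_of_mem hj) h)
        (fun i hi => ?_))
      have hiP : F i ∣ F a * Q := by rw [← hQ]; exact hd i (Finset.mem_insert_of_mem hi)
      rcases (hp i (Finset.mem_insert_of_mem hi)).dvd_or_dvd hiP with h | h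
      · exact absurd h (hnd i (Finset.mem_insert_of_mem hi) a (Finset.mem_insert_self a s')
          (fun he => ha (he ▸ hi)))
      · exact h
/-- for `f ∈ 𝒱^+` (an `S_n^+`-invariant element of `V ⊗ ℂ[z,h]`) and
`g ∈ D⁻¹𝒱^−` (an `S_n^−`-invariant function of the form `D⁻¹ g₀` with
`g₀ ∈ V ⊗ ℂ[z,h]`), the Shapovalov pairing `𝒮(f,g) = Σ_m f_m g_m` is a polynomial
in `z_1,…,z_n,h` symmetric in `z_1,…,z_n`. -/
theorem statement9 (n N : ℕ) (f g g0 : VV n N)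
    (hfpoly : polyVec f)
    (hfinv : ∀ (i : ℕ) (hi : i + 1 < n), sOp true i hi f = f)
    (hg0 : polyVec g0)
    (hgD : g = fun m => (Dpoly n)⁻¹ * g0 m)
    (hginv : ∀ (i : ℕ) (hi : i + 1 < n), sOp false i hi g = g) :
    ∃ p : MvPolynomial (Fin n ⊕ Unit) ℂ,
      (∑ m : Fin n → Fin N, f m * g m) =
        algebraMap (MvPolynomial (Fin n ⊕ Unit) ℂ) (K n) p ∧
      ∀ σ : Equiv.Perm (Fin n),
        MvPolynomial.rename (⇑(Equiv.sumCongr σ (Equiv.refl Unit))) p = p := by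
  classical
  set S : K n := ∑ m : Fin n → Fin N, f m * g m with hSdef
  have hinv : ∀ σ : Equiv.Perm (Fin n), permK σ S = S := fun σ =>
    full_inv S (fun i hi => adj_inv f g i hi (hfinv i hi) (hginv i hi)) σ
  choose pf hpf using hfpoly
  choose pg hpg using hg0
  set P : MvPolynomial (Fin n ⊕ Unit) ℂ := ∑ m : Fin n → Fin N, pf m * pg m with hP
  have hamP : algebraMap (MvPolynomial (Fin n ⊕ Unit) ℂ) (K n) P
      = ∑ m : Fin n → Fin N, f m * g0 m := by
    rw [hP, map_sum]
    exact Finset.sum_congr rfl fun m _ => by rw [map_mul, ← hpf m, ← hpg m]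
  set pairs : Finset (Fin n × Fin n) :=
    Finset.univ.filter (fun p : Fin n × Fin n => p.1 < p.2) with hpairs
  set D0 : MvPolynomial (Fin n ⊕ Unit) ℂ :=
    ∏ p ∈ pairs, (X (Sum.inl p.1) - X (Sum.inl p.2) + X (Sum.inr ())) with hD0
  have hamD : algebraMap (MvPolynomial (Fin n ⊕ Unit) ℂ) (K n) D0 = Dpoly n := by
    rw [hD0, map_prod, Dpoly]
    exact Finset.prod_congr rfl fun p _ => by rw [map_add, map_sub]; rfl
  have hD0ne : D0 ≠ 0 := by
    rw [hD0]
    exact Finset.prod_ne_zero_iff.mpr fun p _ => (prime_lin p.1 p.2).ne_zero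
  have hamDne : algebraMap (MvPolynomial (Fin n ⊕ Unit) ℂ) (K n) D0 ≠ 0 := fun h =>
    hD0ne (am_inj (by simpa using h))
  have hDpne : Dpoly n ≠ 0 := hamD ▸ hamDne
  have hrel : S * algebraMap (MvPolynomial (Fin n ⊕ Unit) ℂ) (K n) D0
      = algebraMap (MvPolynomial (Fin n ⊕ Unit) ℂ) (K n) P := by
    rw [hSdef, hamP, hamD, Finset.sum_mul]
    refine Finset.sum_congr rfl fun m _ => ?_
    simp only [hgD]
    field_simp
  have hren : ∀ σ : Equiv.Perm (Fin n),
      rename (⇑(Equiv.sumCongr σ (Equiv.refl Unit))) P * D0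
        = rename (⇑(Equiv.sumCongr σ (Equiv.refl Unit))) D0 * P := by
    intro σ
    apply am_inj
    rw [map_mul, map_mul, ← permK_am, ← permK_am, ← hrel, map_mul, hinv σ]
    ring
  have hfac : ∀ q : Fin n × Fin n, q ∈ pairs →
      ((X (Sum.inl q.1) - X (Sum.inl q.2) + X (Sum.inr ())) : MvPolynomial (Fin n ⊕ Unit) ℂ)
        ∣ P := by
    intro q hq
    have hqlt : q.1 < q.2 := by
      rw [hpairs] at hq; exact (Finset.mem_filter.mp hq).2
    have hqne : q.1 ≠ q.2 := ne_of_lt hqlt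
    set σ : Equiv.Perm (Fin n) := Equiv.swap q.1 q.2 with hσ
    have hpD : ((X (Sum.inl q.1) - X (Sum.inl q.2) + X (Sum.inr ()))
        : MvPolynomial (Fin n ⊕ Unit) ℂ) ∣ D0 := by
      rw [hD0]; exact Finset.dvd_prod_of_mem _ hq
    have hdl : ((X (Sum.inl q.1) - X (Sum.inl q.2) + X (Sum.inr ()))
        : MvPolynomial (Fin n ⊕ Unit) ℂ)
        ∣ rename (⇑(Equiv.sumCongr σ (Equiv.refl Unit))) D0 * P := by
      rw [← hren σ]
      exact Dvd.dvd.mul_left hpD _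
    rcases (prime_lin q.1 q.2).dvd_or_dvd hdl with h | h
    · exfalso
      have hrenD : rename (⇑(Equiv.sumCongr σ (Equiv.refl Unit))) D0
          = ∏ p ∈ pairs, (X (Sum.inl (σ p.1)) - X (Sum.inl (σ p.2)) + X (Sum.inr ())) := by
        rw [hD0, map_prod]
        exact Finset.prod_congr rfl fun p _ => by simp [rename_X]
      rw [hrenD] at h
      obtain ⟨r, hr, hdvd⟩ := (prime_lin q.1 q.2).exists_mem_finset_dvd h
      have hrlt : r.1 < r.2 := by
        rw [hpairs] at hr; exact (Finset.mem_filter.mp hr).2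
      refine lin_not_dvd q.1 q.2 (σ r.1) (σ r.2) hqne
        (fun he => ne_of_lt hrlt (σ.injective he)) ?_ hdvd
      intro hpair
      have h1 : σ r.1 = q.1 := (Prod.mk.injEq _ _ _ _ ▸ hpair.symm).1
      have h2 : σ r.2 = q.2 := (Prod.mk.injEq _ _ _ _ ▸ hpair.symm).2
      have e1 : r.1 = q.2 := by
        have := congrArg σ h1
        rwa [hσ, Equiv.swap_apply_self, Equiv.swap_apply_left] at this
      have e2 : r.2 = q.1 := by
        have := congrArg σ h2
        rwa [hσ, Equiv.swap_apply_self, Equiv.swap_apply_right] at this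
      rw [e1, e2] at hrlt
      exact absurd hqlt (lt_asymm hrlt)
    · exact h
  have hDP : D0 ∣ P := by
    rw [hD0]
    refine prod_primes_dvd' pairs _ P (fun q _ => prime_lin q.1 q.2) ?_ hfac
    intro q hq r hr hqr
    have hqlt : q.1 < q.2 := by rw [hpairs] at hq; exact (Finset.mem_filter.mp hq).2
    have hrlt : r.1 < r.2 := by rw [hpairs] at hr; exact (Finset.mem_filter.mp hr).2
    refine lin_not_dvd q.1 q.2 r.1 r.2 (ne_of_lt hqlt) (ne_of_lt hrlt) ?_
    intro hpair
    apply hqr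
    have h1 : q.1 = r.1 := (Prod.mk.injEq _ _ _ _ ▸ hpair).1
    have h2 : q.2 = r.2 := (Prod.mk.injEq _ _ _ _ ▸ hpair).2
    exact Prod.ext h1 h2
  obtain ⟨p0, hp0⟩ := hDP
  have hSam : S = algebraMap (MvPolynomial (Fin n ⊕ Unit) ℂ) (K n) p0 := by
    have h1 : S * algebraMap (MvPolynomial (Fin n ⊕ Unit) ℂ) (K n) D0
        = algebraMap (MvPolynomial (Fin n ⊕ Unit) ℂ) (K n) p0
          * algebraMap (MvPolynomial (Fin n ⊕ Unit) ℂ) (K n) D0 := by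
      rw [hrel, hp0, map_mul]; ring
    exact mul_right_cancel₀ hamDne h1
  refine ⟨p0, hSam, fun σ => ?_⟩
  apply am_inj
  rw [← permK_am, ← hSam, hinv σ, hSam]

end GRTV
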